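/- Let S_d denote the space of symmetric d×d real matrices. Let G : S_d → ℝ satisfy G(A + B) ≤ G(A) + G(B), G(λA) = λG(A) for all λ ≥ 0, and G(A) ≤ G(B) whenever B − A is positive semidefinite. Then there exists a bounded set Σ of positive semidefinite symmetric d×d matrices such that G(A) = (1/2) sup_{γ∈Σ} tr(Aγ) for every A ∈ S_d, and for each A the supremum is attained. -/

import Mathlib

open Matrix Finset

/-- Any linear functional on matrices is computed entrywise via the standard basis. -/
lemma lin_repr {d : ℕ} (g : Matrix (Fin d) (Fin d) ℝ →ₗ[ℝ] ℝ)
    (C : Matrix (Fin d) (Fin d) ℝ) :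
    g C = ∑ i, ∑ j, C i j * g (Matrix.single i j 1) := by
  conv_lhs => rw [matrix_eq_sum_single C]
  rw [map_sum]
  refine Finset.sum_congr rfl fun i _ => ?_
  rw [map_sum]
  refine Finset.sum_congr rfl fun j _ => ?_
  rw [show Matrix.single i j (C i j) = (C i j) • Matrix.single i j (1:ℝ) by
    rw [smul_single, smul_eq_mul, mul_one]]
  rw [LinearMap.map_smul, smul_eq_mul]

lemma sum_repr {d : ℕ} (g : Matrix (Fin d) (Fin d) ℝ →ₗ[ℝ] ℝ)
    (B : Matrix (Fin d) (Fin d) ℝ) :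
    ∑ i, ∑ j, B i j * g (Matrix.single j i 1 + Matrix.single i j 1)
      = g (Bᵀ + B) := by
  rw [map_add, lin_repr g B, lin_repr g Bᵀ]
  have h1 : ∑ i, ∑ j, (Bᵀ) i j * g (Matrix.single i j (1:ℝ))
      = ∑ i, ∑ j, B i j * g (Matrix.single j i (1:ℝ)) := by
    rw [Finset.sum_comm]
    rfl
  rw [h1, ← Finset.sum_add_distrib]
  refine Finset.sum_congr rfl fun i _ => ?_
  rw [← Finset.sum_add_distrib]
  refine Finset.sum_congr rfl fun j _ => ?_
  rw [map_add]
  ring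

theorem stmt2 {d : ℕ} (G : Matrix (Fin d) (Fin d) ℝ → ℝ)
    (hsub : ∀ A B : Matrix (Fin d) (Fin d) ℝ,
      A.IsSymm → B.IsSymm → G (A + B) ≤ G A + G B)
    (hpos : ∀ (l : ℝ), 0 ≤ l → ∀ A : Matrix (Fin d) (Fin d) ℝ,
      A.IsSymm → G (l • A) = l * G A)
    (hmono : ∀ A B : Matrix (Fin d) (Fin d) ℝ,
      A.IsSymm → B.IsSymm → (B - A).PosSemidef → G A ≤ G B) :
    ∃ S : Set (Matrix (Fin d) (Fin d) ℝ),
      (∀ γ ∈ S, γ.PosSemidef) ∧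
      (∃ R : ℝ, ∀ γ ∈ S, ∀ i j, |γ i j| ≤ R) ∧
      (∀ A : Matrix (Fin d) (Fin d) ℝ, A.IsSymm →
        IsGreatest {r : ℝ | ∃ γ ∈ S, r = (1 / 2) * (A * γ).trace} (G A)) := by
  classical
  have hG0 : G 0 = 0 := by
    have h := hpos 0 le_rfl 0 (isSymm_zero)
    simpa using h
  -- symmetrization
  have hsym2 : ∀ M : Matrix (Fin d) (Fin d) ℝ, ((1/2 : ℝ) • (M + Mᵀ)).IsSymm := by
    intro M
    unfold Matrix.IsSymm
    rw [transpose_smul, transpose_add, transpose_transpose, add_comm]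
  set N : Matrix (Fin d) (Fin d) ℝ → ℝ := fun M => G ((1/2 : ℝ) • (M + Mᵀ)) with hN
  have hNsymm : ∀ M : Matrix (Fin d) (Fin d) ℝ, M.IsSymm → N M = G M := by
    intro M hM
    have h : (1/2 : ℝ) • (M + Mᵀ) = M := by
      rw [hM, ← two_smul ℝ M, smul_smul]
      norm_num
    simp only [hN, h]
  have N_hom : ∀ c : ℝ, 0 < c → ∀ x, N (c • x) = c * N x := by
    intro c hc x
    have h1 : (1/2 : ℝ) • (c • x + (c • x)ᵀ) = c • ((1/2:ℝ) • (x + xᵀ)) := by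
      rw [transpose_smul, ← smul_add, smul_comm]
    simp only [hN, h1]
    exact hpos c hc.le _ (hsym2 x)
  have N_add : ∀ x y, N (x + y) ≤ N x + N y := by
    intro x y
    have h1 : (1/2:ℝ) • (x + y + (x+y)ᵀ) = (1/2:ℝ) • (x+xᵀ) + (1/2:ℝ) • (y+yᵀ) := by
      rw [transpose_add, ← smul_add]
      congr 1
      abel
    simp only [hN, h1]
    exact hsub _ _ (hsym2 x) (hsym2 y)
  have hNneg : ∀ P : Matrix (Fin d) (Fin d) ℝ, P.PosSemidef → N (-P) ≤ 0 := by
    intro P hP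
    have hPs : P.IsSymm := by
      have h := hP.1
      rwa [Matrix.IsHermitian, conjTranspose_eq_transpose_of_trivial] at h
    have hs : (-P).IsSymm := hPs.neg
    rw [hNsymm _ hs]
    have h := hmono (-P) 0 hs isSymm_zero (by simpa using hP)
    simpa [hG0] using h
  have hGsum : ∀ A : Matrix (Fin d) (Fin d) ℝ, A.IsSymm → 0 ≤ G A + G (-A) := by
    intro A hA
    have h := hsub A (-A) hA hA.neg
    simpa [hG0] using h
  -- the set
  set S : Set (Matrix (Fin d) (Fin d) ℝ) :=
    {γ | γ.PosSemidef ∧ ∀ B : Matrix (Fin d) (Fin d) ℝ, B.IsSymm →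
      (1/2 : ℝ) * (B * γ).trace ≤ G B} with hS
  refine ⟨S, fun γ hγ => hγ.1, ?_, ?_⟩
  · -- boundedness
    set Bm : Fin d → Fin d → Matrix (Fin d) (Fin d) ℝ :=
      fun i j => Matrix.single i j 1 + Matrix.single j i 1 with hBm
    have hBsymm : ∀ i j, (Bm i j).IsSymm := by
      intro i j
      unfold Matrix.IsSymm
      ext a b
      simp only [hBm, transpose_apply, Matrix.add_apply, Matrix.single, of_apply]
      simp only [and_comm]
      exact add_comm _ _
    have htr : ∀ (γ : Matrix (Fin d) (Fin d) ℝ) i j,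
        (Bm i j * γ).trace = γ j i + γ i j := by
      intro γ i j
      simp [hBm, Matrix.trace, Matrix.diag, Matrix.mul_apply, Matrix.single,
        add_mul, Finset.sum_add_distrib, ite_and]
    refine ⟨∑ p : Fin d × Fin d, (|G (Bm p.1 p.2)| + |G (-(Bm p.1 p.2))|), ?_⟩
    intro γ hγ i j
    have hsymγ : γ j i = γ i j := by
      have h := hγ.1.1
      rw [Matrix.IsHermitian, conjTranspose_eq_transpose_of_trivial] at h
      have h2 := congrFun (congrFun h i) j
      simpa using h2
    have h1 : γ i j ≤ G (Bm i j) := by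
      have h := hγ.2 (Bm i j) (hBsymm i j)
      rw [htr, hsymγ] at h
      linarith
    have h2 : -γ i j ≤ G (-(Bm i j)) := by
      have h := hγ.2 (-(Bm i j)) (hBsymm i j).neg
      rw [Matrix.neg_mul, Matrix.trace_neg, htr, hsymγ] at h
      linarith
    have hterm : |G (Bm i j)| + |G (-(Bm i j))|
        ≤ ∑ p : Fin d × Fin d, (|G (Bm p.1 p.2)| + |G (-(Bm p.1 p.2))|) := by
      refine Finset.single_le_sum (f := fun p : Fin d × Fin d =>
        |G (Bm p.1 p.2)| + |G (-(Bm p.1 p.2))|) (fun p _ => by positivity) (Finset.mem_univ (i, j))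
    rw [abs_le]
    constructor
    · have := le_abs_self (G (-(Bm i j)))
      nlinarith [abs_nonneg (G (Bm i j))]
    · have := le_abs_self (G (Bm i j))
      nlinarith [abs_nonneg (G (-(Bm i j)))]
  · -- IsGreatest
    intro A hA
    constructor
    · -- membership via Hahn-Banach
      have H : ∀ c : ℝ, c • A = 0 → c • (G A) = 0 := by
        intro c hc
        rcases smul_eq_zero.mp hc with h | h
        · rw [h, zero_smul]
        · rw [h] at *
          rw [hG0, smul_zero]
      set f := LinearPMap.mkSpanSingleton' (σ := RingHom.id ℝ) A (G A) H with hf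
      have hdom : f.domain = Submodule.span ℝ {A} := LinearPMap.domain_mkSpanSingleton (σ := RingHom.id ℝ) A (G A) H
      have hfle : ∀ x : f.domain, f x ≤ N x := by
        rintro ⟨x, hx⟩
        obtain ⟨c, hc⟩ := Submodule.mem_span_singleton.mp (hdom ▸ hx)
        subst hc
        rw [LinearPMap.mkSpanSingleton'_apply]
        show c * G A ≤ N (c • A)
        rcases lt_trichotomy c 0 with hcn | hc0 | hcp
        · have h1 : c • A = (-c) • (-A) := by rw [smul_neg, neg_smul, neg_neg]
          rw [h1, N_hom (-c) (by linarith), hNsymm _ hA.neg]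
          have := hGsum A hA
          nlinarith
        · simp [hc0, hN, hG0]
        · rw [N_hom c hcp, hNsymm _ hA]
      obtain ⟨g, hg1, hg2⟩ := exists_extension_of_le_sublinear f N N_hom N_add hfle
      have hAmem : A ∈ f.domain := by
        rw [hdom]
        exact Submodule.mem_span_singleton_self A
      have hgA : g A = G A := by
        have h := hg1 ⟨A, hAmem⟩
        rwa [LinearPMap.mkSpanSingleton'_apply_self] at h
      -- build γ
      set γ : Matrix (Fin d) (Fin d) ℝ :=
        Matrix.of fun i j => g (Matrix.single i j 1 + Matrix.single j i 1) with hγdef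
      have key : ∀ B : Matrix (Fin d) (Fin d) ℝ, B.IsSymm →
          (1/2 : ℝ) * (B * γ).trace = g B := by
        intro B hB
        have h1 : (B * γ).trace = ∑ i, ∑ j, B i j * γ j i := by
          simp [Matrix.trace, Matrix.diag, Matrix.mul_apply]
        have h2 : ∑ i, ∑ j, B i j * γ j i = g (Bᵀ + B) := by
          have : ∀ i j, γ j i = g (Matrix.single j i 1 + Matrix.single i j 1) := by
            intro i j; rfl
          calc ∑ i, ∑ j, B i j * γ j i
              = ∑ i, ∑ j, B i j * g (Matrix.single j i 1 + Matrix.single i j 1) := by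
                simp only [this]
            _ = g (Bᵀ + B) := sum_repr g B
        rw [h1, h2, hB, map_add]
        ring
      have hγpsd : γ.PosSemidef := by
        have hγsymm : γ.IsSymm := by
          unfold Matrix.IsSymm
          ext a b
          simp only [hγdef, transpose_apply, of_apply]
          rw [add_comm]
        refine posSemidef_iff_dotProduct_mulVec.mpr ⟨?_, ?_⟩
        · rw [Matrix.IsHermitian, conjTranspose_eq_transpose_of_trivial]
          exact hγsymm
        · intro x
          have hvsymm : (vecMulVec x x).IsSymm := by
            unfold Matrix.IsSymm
            ext a b
            simp [vecMulVec, mul_comm]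
          have hvpsd : (vecMulVec x x).PosSemidef := by
            refine posSemidef_iff_dotProduct_mulVec.mpr ⟨?_, ?_⟩
            · rw [Matrix.IsHermitian, conjTranspose_eq_transpose_of_trivial]
              exact hvsymm
            · intro y
              have h1 : star y ⬝ᵥ (vecMulVec x x *ᵥ y)
                  = (∑ i, x i * y i) * (∑ i, x i * y i) := by
                simp only [star_trivial, dotProduct, mulVec, vecMulVec_apply,
                  Finset.mul_sum, Finset.sum_mul]
                refine Finset.sum_congr rfl fun i _ => Finset.sum_congr rfl fun j _ => ?_
                ring
              rw [h1]
              exact mul_self_nonneg _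
          have hgv : 0 ≤ g (vecMulVec x x) := by
            have h1 : g (-(vecMulVec x x)) ≤ N (-(vecMulVec x x)) := hg2 _
            have h2 := hNneg _ hvpsd
            rw [map_neg] at h1
            linarith
          have hγswap : ∀ a b, γ a b = γ b a := by
            intro a b
            show g _ = g _
            rw [add_comm]
          have h3 : star x ⬝ᵥ (γ *ᵥ x) = (vecMulVec x x * γ).trace := by
            simp only [star_trivial, dotProduct, mulVec, Matrix.trace, Matrix.diag,
              Matrix.mul_apply, vecMulVec_apply, Finset.mul_sum]
            refine Finset.sum_congr rfl fun i _ => Finset.sum_congr rfl fun j _ => ?_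
            rw [hγswap j i]
            ring
          rw [h3]
          have h4 := key (vecMulVec x x) hvsymm
          nlinarith
      refine ⟨γ, ⟨hγpsd, ?_⟩, ?_⟩
      · intro B hB
        rw [key B hB]
        calc g B ≤ N B := hg2 B
          _ = G B := hNsymm B hB
      · rw [key A hA]
        exact hgA.symm
    · rintro r ⟨γ, hγ, rfl⟩
      exact hγ.2 A hA
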